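/- Let (Ω, 𝓕, P) be a probability space with a filtration (𝓕_t)_{t ≥ 0}. Let (Y_t)_{t ≥ 1} be identically distributed square-integrable real random variables with mean μ, let (B_t)_{t ≥ 1} be events, and suppose for each t: Y_t and 𝟙_{B_t} are 𝓕_t-measurable, σ(Y_t) is independent of the σ-algebra generated by 𝓕_{t−1} and B_t, and E[𝟙_{B_t} | 𝓕_{t−1}] ≥ c almost surely for a constant c > 0. Let N_t = Σ_{s=1}^t 𝟙_{B_s}. Then, almost surely, N_t → ∞ and (1/N_t) Σ_{s=1}^t 𝟙_{B_s} Y_s → μ as t → ∞. -/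

import Mathlib

open MeasureTheory ProbabilityTheory Filter

lemma aux_mul_int {Ω : Type*} [m0 : MeasurableSpace Ω] {μ : Measure Ω}
    {f g : Ω → ℝ} (hf : MemLp f 2 μ) (hg : MemLp g 2 μ) :
    Integrable (fun ω => f ω * g ω) μ := by
  have h := hf.smul (φ := g) hg (r := 1)
    (hpqr := ⟨by rw [ENNReal.inv_two_add_inv_two, inv_one]⟩)
  rw [memLp_one_iff_integrable] at h
  have : (fun ω => f ω * g ω) = g • f := by funext ω; simp [mul_comm]
  rwa [this]

lemma aux_cheb {Ω : Type*} [m0 : MeasurableSpace Ω] (μ : Measure Ω) [IsProbabilityMeasure μ]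
    (g : Ω → ℝ) (hint : Integrable (fun ω => (g ω)^2) μ)
    (a : ℝ) (ha : 0 < a) :
    μ {ω | a ≤ |g ω|} ≤ ENNReal.ofReal ((∫ ω, (g ω)^2 ∂μ) / a^2) := by
  have h1 : a^2 * (μ {ω | a^2 ≤ (g ω)^2}).toReal ≤ ∫ ω, (g ω)^2 ∂μ :=
    mul_meas_ge_le_integral_of_nonneg (Eventually.of_forall fun ω => sq_nonneg _) hint (a^2)
  have hset : {ω | a ≤ |g ω|} = {ω | a^2 ≤ (g ω)^2} := by
    ext ω
    simp only [Set.mem_setOf_eq]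
    rw [← sq_abs (g ω)]
    exact (pow_le_pow_iff_left₀ ha.le (abs_nonneg _) two_ne_zero).symm
  rw [hset]
  have h2 : (μ {ω | a^2 ≤ (g ω)^2}).toReal ≤ (∫ ω, (g ω)^2 ∂μ) / a^2 := by
    rw [le_div_iff₀ (by positivity)]
    linarith [h1]
  calc μ {ω | a^2 ≤ (g ω)^2} = ENNReal.ofReal (μ {ω | a^2 ≤ (g ω)^2}).toReal :=
        (ENNReal.ofReal_toReal (measure_ne_top μ _)).symm
    _ ≤ _ := ENNReal.ofReal_le_ofReal h2

lemma aux_sq_sum {Ω : Type*} [m0 : MeasurableSpace Ω] (μ : Measure Ω) [IsProbabilityMeasure μ]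
    (Z : ℕ → Ω → ℝ) (K : ℝ)
    (hL2 : ∀ s, 1 ≤ s → MemLp (Z s) 2 μ)
    (hK : ∀ s, 1 ≤ s → ∫ ω, (Z s ω)^2 ∂μ ≤ K)
    (horth : ∀ s u, 1 ≤ s → s < u → ∫ ω, Z s ω * Z u ω ∂μ = 0)
    (F : Finset ℕ) (hF : ∀ s ∈ F, 1 ≤ s) :
    ∫ ω, (∑ s ∈ F, Z s ω)^2 ∂μ ≤ K * F.card := by
  have hmul : ∀ s ∈ F, ∀ u ∈ F, Integrable (fun ω => Z s ω * Z u ω) μ :=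
    fun s hs u hu => aux_mul_int (hL2 s (hF s hs)) (hL2 u (hF u hu))
  have horth' : ∀ s ∈ F, ∀ u ∈ F, s ≠ u → ∫ ω, Z s ω * Z u ω ∂μ = 0 := by
    intro s hs u hu hne
    rcases lt_or_gt_of_ne hne with h | h
    · exact horth s u (hF s hs) h
    · rw [show (fun ω => Z s ω * Z u ω) = fun ω => Z u ω * Z s ω from funext fun ω => mul_comm _ _]
      exact horth u s (hF u hu) h
  have hexp : ∫ ω, (∑ s ∈ F, Z s ω)^2 ∂μ = ∑ s ∈ F, ∑ u ∈ F, ∫ ω, Z s ω * Z u ω ∂μ := by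
    have : ∀ ω, (∑ s ∈ F, Z s ω)^2 = ∑ s ∈ F, ∑ u ∈ F, Z s ω * Z u ω := by
      intro ω; rw [sq, Finset.sum_mul_sum]
    simp_rw [this]
    rw [integral_finset_sum _ (fun s hs =>
      integrable_finset_sum _ (fun u hu => hmul s hs u hu))]
    exact Finset.sum_congr rfl fun s hs => integral_finset_sum _ (fun u hu => hmul s hs u hu)
  rw [hexp]
  calc ∑ s ∈ F, ∑ u ∈ F, ∫ ω, Z s ω * Z u ω ∂μ
      = ∑ s ∈ F, ∫ ω, Z s ω * Z s ω ∂μ := by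
        refine Finset.sum_congr rfl fun s hs => ?_
        exact Finset.sum_eq_single_of_mem s hs (fun u hu hne => horth' s hs u hu (Ne.symm hne))
    _ ≤ ∑ s ∈ F, K := by
        refine Finset.sum_le_sum fun s hs => ?_
        simpa [sq] using hK s (hF s hs)
    _ = K * F.card := by rw [Finset.sum_const, nsmul_eq_mul, mul_comm]

lemma aux_bc {Ω : Type*} [m0 : MeasurableSpace Ω] (μ : Measure Ω) [IsProbabilityMeasure μ]
    (G : ℕ → Ω → ℝ) (C : ℝ)
    (hint : ∀ n, 1 ≤ n → Integrable (fun ω => (G n ω)^2) μ)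
    (hbound : ∀ n, 1 ≤ n → ∫ ω, (G n ω)^2 ∂μ ≤ C * (n:ℝ)^2) :
    ∀ᵐ ω ∂μ, ∀ k : ℕ, ∀ᶠ n in atTop, |G n ω| ≤ (1/(k+1) : ℝ) * (n:ℝ)^2 := by
  have hC : 0 ≤ C := by
    have h0 := hbound 1 le_rfl
    have h1 : (0:ℝ) ≤ ∫ ω, (G 1 ω)^2 ∂μ := integral_nonneg fun ω => sq_nonneg _
    norm_num at h0
    linarith
  rw [ae_all_iff]
  intro k
  set ε : ℝ := 1/(k+1) with hεdef
  have hε0 : 0 < ε := by positivity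
  set s : ℕ → Set Ω := fun n => {ω | ε * ((n+1:ℕ):ℝ)^2 ≤ |G (n+1) ω|} with hsdef
  have hsum : (∑' n, μ (s n)) ≠ ⊤ := by
    have hb : ∀ n : ℕ, μ (s n) ≤ ENNReal.ofReal ((C/ε^2) * (1/((n:ℝ)+1)^2)) := by
      intro n
      have hn1 : (0:ℝ) < ((n+1:ℕ):ℝ) := by positivity
      have h1 := aux_cheb μ (G (n+1)) (hint (n+1) (Nat.le_add_left 1 n))
        (ε * ((n+1:ℕ):ℝ)^2) (by positivity)
      refine h1.trans (ENNReal.ofReal_le_ofReal ?_)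
      rw [div_le_iff₀ (by positivity)]
      have h2 : (C/ε^2) * (1/((n:ℝ)+1)^2) * (ε * ((n+1:ℕ):ℝ)^2)^2 = C * ((n+1:ℕ):ℝ)^2 := by
        push_cast
        field_simp
      rw [h2]
      exact hbound (n+1) (Nat.le_add_left 1 n)
    have hsummable : Summable (fun n : ℕ => (C/ε^2) * (1/((n:ℝ)+1)^2)) := by
      apply Summable.mul_left
      have h := (Real.summable_one_div_nat_pow (p := 2)).mpr one_lt_two
      have h2 := (summable_nat_add_iff 1).mpr h
      simpa [add_comm] using h2
    have : (∑' n, μ (s n)) ≤ ENNReal.ofReal (∑' n : ℕ, (C/ε^2) * (1/((n:ℝ)+1)^2)) := by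
      rw [ENNReal.ofReal_tsum_of_nonneg (fun n => by positivity) hsummable]
      exact ENNReal.tsum_le_tsum hb
    exact (this.trans_lt ENNReal.ofReal_lt_top).ne
  filter_upwards [MeasureTheory.ae_eventually_notMem hsum] with ω hω
  rw [eventually_atTop] at hω ⊢
  obtain ⟨M, hM⟩ := hω
  refine ⟨M+1, fun n hn => ?_⟩
  obtain ⟨m, rfl⟩ : ∃ m, n = m + 1 := ⟨n - 1, by omega⟩
  have := hM m (by omega)
  rw [hsdef, Set.mem_setOf_eq, not_le] at this
  exact this.le

lemma aux_slln {Ω : Type*} [m0 : MeasurableSpace Ω] (μ : Measure Ω) [IsProbabilityMeasure μ]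
    (Z : ℕ → Ω → ℝ) (K : ℝ)
    (hL2 : ∀ s, 1 ≤ s → MemLp (Z s) 2 μ)
    (hK : ∀ s, 1 ≤ s → ∫ ω, (Z s ω)^2 ∂μ ≤ K)
    (horth : ∀ s u, 1 ≤ s → s < u → ∫ ω, Z s ω * Z u ω ∂μ = 0) :
    ∀ᵐ ω ∂μ, Tendsto (fun t : ℕ => (1/(t:ℝ)) * ∑ s ∈ Finset.Ioc 0 t, Z s ω)
      atTop (nhds 0) := by
  have hK0 : 0 ≤ K :=
    le_trans (integral_nonneg fun ω => sq_nonneg _) (hK 1 le_rfl)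
  set S : ℕ → Ω → ℝ := fun t ω => ∑ s ∈ Finset.Ioc 0 t, Z s ω with hSdef
  set T : ℕ → Ω → ℝ := fun n ω => ∑ s ∈ Finset.Ioc (n^2) ((n+1)^2), |Z s ω| with hTdef
  -- L² facts for S at square times
  have hmemIoc : ∀ a b : ℕ, ∀ s ∈ Finset.Ioc a b, 1 ≤ s := by
    intro a b s hs
    have := (Finset.mem_Ioc.mp hs).1
    omega
  have hSL2 : ∀ t, MemLp (S t) 2 μ := by
    intro t
    have h := memLp_finset_sum' (μ := μ) (p := 2) (Finset.Ioc 0 t)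
      (fun s hs => hL2 s (hmemIoc 0 t s hs))
    have he : (∑ i ∈ Finset.Ioc 0 t, Z i) = S t := by
      funext ω; simp [hSdef, Finset.sum_apply]
    rwa [he] at h
  have hSint : ∀ n, 1 ≤ n → Integrable (fun ω => (S (n^2) ω)^2) μ :=
    fun n _ => (hSL2 (n^2)).integrable_sq
  have hSbd : ∀ n, 1 ≤ n → ∫ ω, (S (n^2) ω)^2 ∂μ ≤ K * (n:ℝ)^2 := by
    intro n _
    have := aux_sq_sum μ Z K hL2 hK horth (Finset.Ioc 0 (n^2)) (hmemIoc 0 (n^2))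
    simpa [Nat.card_Ioc] using this
  -- L² facts for T
  have hTL2 : ∀ n, MemLp (T n) 2 μ := by
    intro n
    have h := memLp_finset_sum' (μ := μ) (p := 2) (Finset.Ioc (n^2) ((n+1)^2))
      (f := fun s ω => |Z s ω|) (fun s hs => by
        have h := hL2 s (hmemIoc _ _ s hs)
        have he : (fun ω => |Z s ω|) = fun ω => ‖Z s ω‖ := by
          funext ω; rw [Real.norm_eq_abs]
        show MemLp (fun ω => |Z s ω|) 2 μ
        rw [he]
        exact h.norm)
    have he : (∑ i ∈ Finset.Ioc (n^2) ((n+1)^2), fun ω => |Z i ω|) = T n := by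
      funext ω; simp [hTdef, Finset.sum_apply]
    rwa [he] at h
  have hTint : ∀ n, 1 ≤ n → Integrable (fun ω => (T n ω)^2) μ :=
    fun n _ => (hTL2 n).integrable_sq
  have hTbd : ∀ n, 1 ≤ n → ∫ ω, (T n ω)^2 ∂μ ≤ (9*K) * (n:ℝ)^2 := by
    intro n hn
    have hcard : (Finset.Ioc (n^2) ((n+1)^2)).card = 2*n+1 := by
      rw [Nat.card_Ioc]; ring_nf; omega
    have hpt : ∀ ω, (T n ω)^2 ≤ (2*n+1 : ℝ) * ∑ s ∈ Finset.Ioc (n^2) ((n+1)^2), (Z s ω)^2 := by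
      intro ω
      have := sq_sum_le_card_mul_sum_sq (s := Finset.Ioc (n^2) ((n+1)^2))
        (f := fun s => |Z s ω|)
      simp only [sq_abs] at this
      rw [hcard] at this
      simpa [hTdef] using this
    have hint2 : Integrable (fun ω => (2*n+1 : ℝ) * ∑ s ∈ Finset.Ioc (n^2) ((n+1)^2), (Z s ω)^2) μ := by
      exact (integrable_finset_sum _ (fun s hs =>
        (hL2 s (hmemIoc _ _ s hs)).integrable_sq)).const_mul _
    have h1 : ∫ ω, (T n ω)^2 ∂μ ≤
        ∫ ω, (2*n+1 : ℝ) * ∑ s ∈ Finset.Ioc (n^2) ((n+1)^2), (Z s ω)^2 ∂μ :=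
      integral_mono (hTint n hn) hint2 hpt
    have h2 : ∫ ω, (2*n+1 : ℝ) * ∑ s ∈ Finset.Ioc (n^2) ((n+1)^2), (Z s ω)^2 ∂μ
        = (2*n+1 : ℝ) * ∑ s ∈ Finset.Ioc (n^2) ((n+1)^2), ∫ ω, (Z s ω)^2 ∂μ := by
      rw [integral_const_mul, integral_finset_sum _ (fun s hs =>
        (hL2 s (hmemIoc _ _ s hs)).integrable_sq)]
    have h3 : ∑ s ∈ Finset.Ioc (n^2) ((n+1)^2), ∫ ω, (Z s ω)^2 ∂μ ≤ (2*n+1 : ℝ) * K := by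
      calc ∑ s ∈ Finset.Ioc (n^2) ((n+1)^2), ∫ ω, (Z s ω)^2 ∂μ
          ≤ ∑ _s ∈ Finset.Ioc (n^2) ((n+1)^2), K :=
            Finset.sum_le_sum fun s hs => hK s (hmemIoc _ _ s hs)
        _ = (2*n+1 : ℝ) * K := by
            rw [Finset.sum_const, hcard, nsmul_eq_mul]; push_cast; ring
    have hn1 : (1:ℝ) ≤ (n:ℝ) := by exact_mod_cast hn
    calc ∫ ω, (T n ω)^2 ∂μ
        ≤ (2*n+1 : ℝ) * ∑ s ∈ Finset.Ioc (n^2) ((n+1)^2), ∫ ω, (Z s ω)^2 ∂μ := h1.trans_eq h2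
      _ ≤ (2*n+1 : ℝ) * ((2*n+1 : ℝ) * K) :=
          mul_le_mul_of_nonneg_left h3 (by positivity)
      _ ≤ (9*K) * (n:ℝ)^2 := by nlinarith [hn1, hK0, mul_nonneg hK0 (sq_nonneg ((n:ℝ)-1))]
  have hbc1 := aux_bc μ (fun n => S (n^2)) K hSint hSbd
  have hbc2 := aux_bc μ T (9*K) hTint hTbd
  filter_upwards [hbc1, hbc2] with ω h1 h2
  rw [Metric.tendsto_atTop]
  intro δ hδ
  obtain ⟨k, hk⟩ := exists_nat_gt (2/δ)
  have hk0 : (0:ℝ) < k + 1 := by positivity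
  have hkk : 2 * (1/((k:ℝ)+1)) < δ := by
    rw [div_lt_iff₀ hδ] at hk
    rw [mul_one_div, div_lt_iff₀ hk0]
    nlinarith
  set ε : ℝ := 1/((k:ℝ)+1) with hεdef
  have hε0 : 0 < ε := by positivity
  obtain ⟨M₁, hM₁⟩ := eventually_atTop.mp (h1 k)
  obtain ⟨M₂, hM₂⟩ := eventually_atTop.mp (h2 k)
  set M := max M₁ M₂ + 1 with hMdef
  refine ⟨M^2, fun t ht => ?_⟩
  set n := Nat.sqrt t with hndef
  have hnM : M ≤ n := Nat.le_sqrt.mpr (by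
    calc M * M = M^2 := (sq M).symm
      _ ≤ t := ht)
  have hn1 : 1 ≤ n := le_trans (by omega) hnM
  have hn2t : n^2 ≤ t := Nat.sqrt_le' t
  have htn : t < (n+1)^2 := by
    have := Nat.lt_succ_sqrt' t
    simpa [hndef] using this
  have ht1 : 1 ≤ t := le_trans (by nlinarith) hn2t
  have ht0 : (0:ℝ) < (t:ℝ) := by exact_mod_cast ht1
  -- split the sum
  have hsplit : S t ω = S (n^2) ω + ∑ s ∈ Finset.Ioc (n^2) t, Z s ω := by
    rw [hSdef]
    exact (Finset.sum_Ioc_consecutive _ (Nat.zero_le _) hn2t).symm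
  have htail : |∑ s ∈ Finset.Ioc (n^2) t, Z s ω| ≤ T n ω := by
    calc |∑ s ∈ Finset.Ioc (n^2) t, Z s ω| ≤ ∑ s ∈ Finset.Ioc (n^2) t, |Z s ω| :=
          Finset.abs_sum_le_sum_abs _ _
      _ ≤ T n ω := Finset.sum_le_sum_of_subset_of_nonneg
          (Finset.Ioc_subset_Ioc_right htn.le) (fun s _ _ => abs_nonneg _)
  have hSn : |S (n^2) ω| ≤ ε * (n:ℝ)^2 := hM₁ n (le_trans (by omega) hnM)
  have hTn : T n ω ≤ ε * (n:ℝ)^2 :=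
    le_trans (le_abs_self _) (hM₂ n (le_trans (by omega) hnM))
  have hn2tR : ((n:ℝ))^2 ≤ (t:ℝ) := by exact_mod_cast hn2t
  have hSt : |S t ω| ≤ 2 * ε * (t:ℝ) := by
    calc |S t ω| ≤ |S (n^2) ω| + |∑ s ∈ Finset.Ioc (n^2) t, Z s ω| := by
          rw [hsplit]; exact abs_add_le _ _
      _ ≤ ε * (n:ℝ)^2 + ε * (n:ℝ)^2 := add_le_add hSn (htail.trans hTn)
      _ = 2 * ε * (n:ℝ)^2 := by ring
      _ ≤ 2 * ε * (t:ℝ) := by nlinarith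
  rw [Real.dist_eq, sub_zero]
  calc |1/(t:ℝ) * S t ω| = 1/(t:ℝ) * |S t ω| := by
        rw [abs_mul, abs_of_pos (by positivity)]
    _ ≤ 1/(t:ℝ) * (2 * ε * (t:ℝ)) := by
        apply mul_le_mul_of_nonneg_left hSt (by positivity)
    _ = 2 * ε := by field_simp
    _ < δ := hkk

set_option maxHeartbeats 1000000

/-- Strong consistency of the adaptively sampled arm-wise sample mean (Lemma 1):
if the rewards `Y_t` are identically distributed with mean `μm`, square-integrable,
`σ(Y_t)` is independent of the σ-algebra generated by `𝓕_{t−1}` and the draw `B_t`,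
and the conditional draw probability is bounded below by `c > 0`, then almost surely
`N_t = Σ_{s=1}^t 𝟙_{B_s} → ∞` and `(1/N_t) Σ_{s=1}^t 𝟙_{B_s} Y_s → μm`. -/
theorem stmt16 {Ω : Type*} [m0 : MeasurableSpace Ω] (μ : Measure Ω) [IsProbabilityMeasure μ]
    (ℱ : Filtration ℕ m0) (Y : ℕ → Ω → ℝ) (B : ℕ → Set Ω)
    (μm : ℝ)
    (h_ident : ∀ t, 1 ≤ t → Measure.map (Y t) μ = Measure.map (Y 1) μ)
    (h_sq : ∀ t, 1 ≤ t → MemLp (Y t) 2 μ)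
    (h_mean : ∀ t, 1 ≤ t → ∫ ω, Y t ω ∂μ = μm)
    (hY_meas : ∀ t, 1 ≤ t → Measurable[ℱ t] (Y t))
    (hB_meas : ∀ t, 1 ≤ t → MeasurableSet[ℱ t] (B t))
    (h_indep : ∀ t, 1 ≤ t →
      Indep (MeasurableSpace.comap (Y t) inferInstance)
        (ℱ (t - 1) ⊔ MeasurableSpace.generateFrom {B t}) μ)
    (c : ℝ) (hc : 0 < c)
    (hcond : ∀ t, 1 ≤ t →
      ∀ᵐ ω ∂μ, c ≤ (μ[(B t).indicator (fun _ => (1 : ℝ)) | ℱ (t - 1)]) ω)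
    (N : ℕ → Ω → ℝ)
    (hN : ∀ t ω, N t ω = ∑ s ∈ Finset.Icc 1 t, (B s).indicator (fun _ => (1 : ℝ)) ω) :
    ∀ᵐ ω ∂μ,
      Tendsto (fun t => N t ω) atTop atTop ∧
      Tendsto (fun t => (1 / N t ω) * ∑ s ∈ Finset.Icc 1 t, (B s).indicator (Y s) ω)
        atTop (nhds μm) := by
  classical
  have hIcc : ∀ t : ℕ, Finset.Icc 1 t = Finset.Ioc 0 t := fun t => Finset.Icc_add_one_left_eq_Ioc 0 t
  set ind : ℕ → Ω → ℝ := fun s => (B s).indicator (fun _ => (1:ℝ)) with hinddef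
  set p : ℕ → Ω → ℝ := fun s => μ[ind s | ℱ (s-1)] with hpdef
  set Z : ℕ → Ω → ℝ := fun s ω => (B s).indicator (Y s) ω - μm * ind s ω with hZdef
  set W : ℕ → Ω → ℝ := fun s ω => ind s ω - p s ω with hWdef
  -- basic measurability
  have hBm0 : ∀ s, 1 ≤ s → MeasurableSet (B s) := fun s hs => (ℱ.le s) _ (hB_meas s hs)
  have hYm0 : ∀ s, 1 ≤ s → Measurable (Y s) :=
    fun s hs => (hY_meas s hs).mono (ℱ.le s) le_rfl
  have hindm0 : ∀ s, 1 ≤ s → Measurable (ind s) :=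
    fun s hs => measurable_const.indicator (hBm0 s hs)
  have hind_int : ∀ s, 1 ≤ s → Integrable (ind s) μ :=
    fun s hs => (integrable_const (1:ℝ)).indicator (hBm0 s hs)
  have hpm0 : ∀ s, Measurable (p s) :=
    fun s => (stronglyMeasurable_condExp.mono (ℱ.le (s-1))).measurable
  -- Z facts
  have hZeq : ∀ s ω, Z s ω = (B s).indicator (fun ω => Y s ω - μm) ω := by
    intro s ω
    simp only [hZdef, hinddef, Set.indicator_apply]
    split_ifs <;> ring
  have hZfun : ∀ s, Z s = (B s).indicator (fun ω => Y s ω - μm) :=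
    fun s => funext (hZeq s)
  have hZL2 : ∀ s, 1 ≤ s → MemLp (Z s) 2 μ := by
    intro s hs
    rw [hZfun s]
    exact MemLp.indicator (hBm0 s hs) ((h_sq s hs).sub (memLp_const μm))
  -- K : second moment bound
  set K : ℝ := ∫ ω, (Y 1 ω - μm)^2 ∂μ with hKdef
  have hYsqint : ∀ s, 1 ≤ s → Integrable (fun ω => (Y s ω - μm)^2) μ :=
    fun s hs => ((h_sq s hs).sub (memLp_const μm)).integrable_sq
  have hZK : ∀ s, 1 ≤ s → ∫ ω, (Z s ω)^2 ∂μ ≤ K := by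
    intro s hs
    have hpt : ∀ ω, (Z s ω)^2 ≤ (Y s ω - μm)^2 := by
      intro ω
      rw [hZeq s ω]
      simp only [Set.indicator_apply]
      split_ifs
      · exact le_rfl
      · simpa using sq_nonneg (Y s ω - μm)
    have h1 : ∫ ω, (Z s ω)^2 ∂μ ≤ ∫ ω, (Y s ω - μm)^2 ∂μ :=
      integral_mono ((hZL2 s hs).integrable_sq) (hYsqint s hs) hpt
    have h2 : ∫ ω, (Y s ω - μm)^2 ∂μ = K := by
      rw [hKdef]
      have hg : Measurable (fun y : ℝ => (y - μm)^2) := by measurability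
      calc ∫ ω, (Y s ω - μm)^2 ∂μ
          = ∫ y, (y - μm)^2 ∂(Measure.map (Y s) μ) := by
            rw [integral_map (hYm0 s hs).aemeasurable hg.aestronglyMeasurable]
        _ = ∫ y, (y - μm)^2 ∂(Measure.map (Y 1) μ) := by rw [h_ident s hs]
        _ = ∫ ω, (Y 1 ω - μm)^2 ∂μ := by
            rw [integral_map (hYm0 1 le_rfl).aemeasurable hg.aestronglyMeasurable]
    rw [← h2]
    exact h1
  -- orthogonality of Z
  have horthZ : ∀ s u, 1 ≤ s → s < u → ∫ ω, Z s ω * Z u ω ∂μ = 0 := by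
    intro s u hs hsu
    have hu : 1 ≤ u := le_trans hs hsu.le
    have hm'le : ℱ (u-1) ⊔ MeasurableSpace.generateFrom {B u} ≤ m0 := by
      refine sup_le (ℱ.le (u-1)) (MeasurableSpace.generateFrom_le ?_)
      intro t ht
      rw [Set.mem_singleton_iff] at ht
      rw [ht]
      exact hBm0 u hu
    set g : Ω → ℝ := fun ω => Z s ω * ind u ω with hgdef
    set f : Ω → ℝ := fun ω => Y u ω - μm with hfdef
    have hfactor : ∀ ω, Z s ω * Z u ω = g ω * f ω := by
      intro ω
      simp only [hgdef, hfdef, hZdef, hinddef, Set.indicator_apply]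
      split_ifs <;> ring
    -- measurability of g wrt m'
    have hZs_meas : Measurable[ℱ (u-1)] (Z s) := by
      have h1 : Measurable[ℱ s] (Z s) := by
        have hi1 : Measurable[ℱ s] ((B s).indicator (Y s)) :=
          (hY_meas s hs).indicator (hB_meas s hs)
        have hi2 : Measurable[ℱ s] (ind s) :=
          measurable_const.indicator (hB_meas s hs)
        exact hi1.sub (hi2.const_mul μm)
      exact h1.mono (ℱ.mono (by omega)) le_rfl
    have hindu_meas : Measurable[MeasurableSpace.generateFrom {B u}] (ind u) :=
      measurable_const.indicator (MeasurableSpace.measurableSet_generateFrom rfl)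
    have hg_meas : Measurable[ℱ (u-1) ⊔ MeasurableSpace.generateFrom {B u}] g :=
      (hZs_meas.mono le_sup_left le_rfl).mul (hindu_meas.mono le_sup_right le_rfl)
    have hf_meas : Measurable[MeasurableSpace.comap (Y u) inferInstance] f := by
      have hY' : Measurable[MeasurableSpace.comap (Y u) inferInstance] (Y u) :=
        Measurable.of_comap_le le_rfl
      exact hY'.sub measurable_const
    have hIF : IndepFun f g μ := by
      rw [IndepFun_iff_Indep]
      exact indep_of_indep_of_le_right
        (indep_of_indep_of_le_left (h_indep u hu) hf_meas.comap_le)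
        hg_meas.comap_le
    have hgm0 : Measurable g := hg_meas.mono hm'le le_rfl
    have hfm0 : Measurable f := (hYm0 u hu).sub measurable_const
    have hg_int : Integrable g μ := by
      have hgL2 : MemLp g 2 μ := by
        refine MemLp.of_le (hZL2 s hs) hgm0.aestronglyMeasurable
          (Eventually.of_forall fun ω => ?_)
        simp only [hgdef, hinddef, Real.norm_eq_abs, abs_mul, Set.indicator_apply]
        split_ifs <;> simp [abs_nonneg]
      exact hgL2.integrable one_le_two
    have hf_int : Integrable f μ := ((h_sq u hu).sub (memLp_const μm)).integrable one_le_two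
    have hfmean : ∫ ω, f ω ∂μ = 0 := by
      rw [hfdef]
      rw [integral_sub ((h_sq u hu).integrable one_le_two) (integrable_const μm)]
      simp [h_mean u hu]
    calc ∫ ω, Z s ω * Z u ω ∂μ = ∫ ω, f ω * g ω ∂μ := by
          refine integral_congr_ae (Eventually.of_forall fun ω => ?_)
          show Z s ω * Z u ω = f ω * g ω
          rw [hfactor ω, mul_comm]
      _ = (∫ ω, f ω ∂μ) * ∫ ω, g ω ∂μ := by
          have := hIF.integral_fun_mul_eq_mul_integral hfm0.aestronglyMeasurable hgm0.aestronglyMeasurable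
          simpa [Pi.mul_apply] using this
      _ = 0 := by rw [hfmean, zero_mul]
  -- W facts
  have hp_le1 : ∀ s, 1 ≤ s → ∀ᵐ ω ∂μ, p s ω ≤ 1 := by
    intro s hs
    have h1 : ind s ≤ᵐ[μ] fun _ => (1:ℝ) := Eventually.of_forall fun ω => by
      simp only [hinddef, Set.indicator_apply]
      split_ifs <;> norm_num
    have h2 := condExp_mono (m := ℱ (s-1)) (hind_int s hs) (integrable_const 1) h1
    rw [condExp_const (ℱ.le (s-1))] at h2
    exact h2
  have hp_nonneg : ∀ s, ∀ᵐ ω ∂μ, 0 ≤ p s ω := by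
    intro s
    have h := condExp_nonneg (m := ℱ (s-1)) (μ := μ)
      (f := ind s) (Eventually.of_forall fun ω =>
        Set.indicator_nonneg (fun _ _ => zero_le_one) ω)
    filter_upwards [h] with ω hω using hω
  have hindb : ∀ s ω, 0 ≤ ind s ω ∧ ind s ω ≤ 1 := by
    intro s ω
    simp only [hinddef, Set.indicator_apply]
    split_ifs <;> norm_num
  have hWm0 : ∀ s, 1 ≤ s → Measurable (W s) := fun s hs => (hindm0 s hs).sub (hpm0 s)
  have hWbdd : ∀ s, 1 ≤ s → ∀ᵐ ω ∂μ, ‖W s ω‖ ≤ 2 := by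
    intro s hs
    filter_upwards [hp_le1 s hs, hp_nonneg s] with ω h1 h0
    rw [Real.norm_eq_abs, hWdef, abs_le]
    constructor
    · simp only; linarith [(hindb s ω).1]
    · simp only; linarith [(hindb s ω).2]
  have hWL2 : ∀ s, 1 ≤ s → MemLp (W s) 2 μ := fun s hs =>
    MemLp.of_bound (hWm0 s hs).aestronglyMeasurable 2 (hWbdd s hs)
  have hWK : ∀ s, 1 ≤ s → ∫ ω, (W s ω)^2 ∂μ ≤ 4 := by
    intro s hs
    have h1 : ∫ ω, (W s ω)^2 ∂μ ≤ ∫ _ω, (4:ℝ) ∂μ := by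
      refine integral_mono_ae ((hWL2 s hs).integrable_sq) (integrable_const 4) ?_
      filter_upwards [hWbdd s hs] with ω hb
      rw [Real.norm_eq_abs] at hb
      nlinarith [abs_nonneg (W s ω), sq_abs (W s ω), abs_mul_abs_self (W s ω)]
    simpa using h1
  have horthW : ∀ s u, 1 ≤ s → s < u → ∫ ω, W s ω * W u ω ∂μ = 0 := by
    intro s u hs hsu
    have hu : 1 ≤ u := le_trans hs hsu.le
    have hWs_sm : StronglyMeasurable[ℱ (u-1)] (W s) := by
      have h1 : StronglyMeasurable[ℱ s] (ind s) :=
        stronglyMeasurable_const.indicator (hB_meas s hs)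
      have h2 : StronglyMeasurable[ℱ (s-1)] (p s) := stronglyMeasurable_condExp
      exact (h1.mono (ℱ.mono (by omega : s ≤ u-1))).sub
        (h2.mono (ℱ.mono (by omega : s-1 ≤ u-1)))
    have hWu_int : Integrable (W u) μ := (hWL2 u hu).integrable one_le_two
    have hprod_int : Integrable (W s * W u) μ := by
      have := aux_mul_int (hWL2 s hs) (hWL2 u hu)
      exact this
    have hWfun : W u = ind u - p u := by funext ω; simp [hWdef]
    have hzero : μ[W u | ℱ (u-1)] =ᵐ[μ] 0 := by
      rw [hWfun]
      calc μ[ind u - p u|ℱ (u-1)]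
          =ᵐ[μ] μ[ind u|ℱ (u-1)] - μ[p u|ℱ (u-1)] :=
            condExp_sub (hind_int u hu) integrable_condExp _
        _ =ᵐ[μ] 0 := by
            rw [condExp_of_stronglyMeasurable (ℱ.le (u-1))
              stronglyMeasurable_condExp integrable_condExp]
            refine Eventually.of_forall fun ω => ?_
            simp [hpdef]
    have h1 : μ[W s * W u|ℱ (u-1)] =ᵐ[μ] 0 := by
      refine (condExp_mul_of_stronglyMeasurable_left hWs_sm hprod_int hWu_int).trans ?_
      filter_upwards [hzero] with ω h
      simp only [Pi.mul_apply, Pi.zero_apply] at h ⊢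
      rw [h, mul_zero]
    calc ∫ ω, W s ω * W u ω ∂μ = ∫ ω, (W s * W u) ω ∂μ := rfl
      _ = ∫ ω, (μ[W s * W u|ℱ (u-1)]) ω ∂μ := (integral_condExp (ℱ.le (u-1))).symm
      _ = 0 := by
          rw [integral_congr_ae h1]
          simp
  -- almost sure limits
  have haeZ := aux_slln μ Z K hZL2 hZK horthZ
  have haeW := aux_slln μ W 4 hWL2 hWK horthW
  have haec : ∀ᵐ ω ∂μ, ∀ s : ℕ, 1 ≤ s → c ≤ p s ω := by
    rw [ae_all_iff]
    intro s
    by_cases hs : 1 ≤ s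
    · filter_upwards [hcond s hs] with ω hω
      intro _
      exact hω
    · exact Eventually.of_forall fun ω h => absurd h hs
  filter_upwards [haeZ, haeW, haec] with ω hZlim hWlim hclow
  -- pointwise assembly
  have hNsum : ∀ t, N t ω = (∑ s ∈ Finset.Ioc 0 t, W s ω) + ∑ s ∈ Finset.Ioc 0 t, p s ω := by
    intro t
    rw [hN t ω, hIcc t, ← Finset.sum_add_distrib]
    refine Finset.sum_congr rfl fun s hs => ?_
    simp [hWdef, hinddef]
  have hplow : ∀ t : ℕ, c * t ≤ ∑ s ∈ Finset.Ioc 0 t, p s ω := by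
    intro t
    have h := Finset.card_nsmul_le_sum (Finset.Ioc 0 t) (fun s => p s ω) c
      (fun s hs => hclow s (by
        have := (Finset.mem_Ioc.mp hs).1; omega))
    rw [Nat.card_Ioc] at h
    simpa [nsmul_eq_mul, mul_comm] using h
  obtain ⟨T₀, hT₀⟩ := Metric.tendsto_atTop.mp hWlim (c/2) (half_pos hc)
  have hNlow : ∀ t, max T₀ 1 ≤ t → (c/2) * t ≤ N t ω := by
    intro t ht
    have ht1 : 1 ≤ t := le_trans (le_max_right _ _) ht
    have ht0 : (0:ℝ) < t := by exact_mod_cast ht1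
    have hd := hT₀ t (le_trans (le_max_left _ _) ht)
    rw [Real.dist_eq, sub_zero, abs_lt] at hd
    have hWsum : -(c/2) * t ≤ ∑ s ∈ Finset.Ioc 0 t, W s ω := by
      have he : (∑ s ∈ Finset.Ioc 0 t, W s ω)
          = (t:ℝ) * (1/(t:ℝ) * ∑ s ∈ Finset.Ioc 0 t, W s ω) := by
        field_simp
      rw [he]
      nlinarith [hd.1]
    rw [hNsum t]
    have := hplow t
    nlinarith
  have hNtend : Tendsto (fun t => N t ω) atTop atTop := by
    refine tendsto_atTop_mono' atTop ?_
      ((tendsto_natCast_atTop_atTop (R := ℝ)).const_mul_atTop (half_pos hc))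
    filter_upwards [eventually_ge_atTop (max T₀ 1)] with t ht using hNlow t ht
  refine ⟨hNtend, ?_⟩
  -- second limit
  have hsum_id : ∀ t, (∑ s ∈ Finset.Icc 1 t, (B s).indicator (Y s) ω)
      = μm * N t ω + ∑ s ∈ Finset.Ioc 0 t, Z s ω := by
    intro t
    rw [hN t ω, hIcc t, Finset.mul_sum, ← Finset.sum_add_distrib]
    refine Finset.sum_congr rfl fun s hs => ?_
    simp only [hZdef, hinddef]
    ring
  have hGlim : Tendsto (fun t : ℕ => (2/c) * |1/(t:ℝ) * ∑ s ∈ Finset.Ioc 0 t, Z s ω|)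
      atTop (nhds 0) := by
    have h := (hZlim.abs).const_mul (2/c)
    rw [abs_zero, mul_zero] at h
    exact h
  have hdiff : Tendsto (fun t : ℕ =>
      (1 / N t ω) * (∑ s ∈ Finset.Icc 1 t, (B s).indicator (Y s) ω) - μm)
      atTop (nhds 0) := by
    refine squeeze_zero_norm' ?_ hGlim
    rw [eventually_atTop]
    refine ⟨max T₀ 1, fun t ht => ?_⟩
    have ht1 : 1 ≤ t := le_trans (le_max_right _ _) ht
    have ht0 : (0:ℝ) < t := by exact_mod_cast ht1
    have hNl := hNlow t ht
    have hNpos : 0 < N t ω := lt_of_lt_of_le (by positivity) hNl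
    have heq : (1 / N t ω) * (∑ s ∈ Finset.Icc 1 t, (B s).indicator (Y s) ω) - μm
        = (∑ s ∈ Finset.Ioc 0 t, Z s ω) / N t ω := by
      rw [hsum_id t]
      field_simp
      ring
    rw [Real.norm_eq_abs, heq, abs_div, abs_of_pos hNpos]
    have h1 : |∑ s ∈ Finset.Ioc 0 t, Z s ω| / N t ω
        ≤ |∑ s ∈ Finset.Ioc 0 t, Z s ω| / ((c/2) * t) :=
      div_le_div_of_nonneg_left (abs_nonneg _) (by positivity) hNl
    refine h1.trans (le_of_eq ?_)
    rw [abs_mul, abs_of_pos (show (0:ℝ) < 1/(t:ℝ) by positivity)]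
    field_simp
  have := hdiff.add_const μm
  simpa using this
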